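/- Let A₀ be a real symmetric n×n matrix and a₀ ∈ ℝⁿ, let V be the (2n+1)×(2n+1) matrix with block form [[−A₀, a₀, 0], [a₀ᵀ, 0, −a₀ᵀ], [0, −a₀, A₀]], and for each t let exp(tV) = G₁(t) G₂(t) be its block Cholesky decomposition with block sizes (n,1,n), where G₁(t) is block lower triangular and G₂(t) is block upper triangular with identity diagonal blocks. Then L(t) = G₁(t)⁻¹ V G₁(t) has block form [[−Q(t), r(t), 0], [a₀ᵀ, 0, −r(t)ᵀ], [0, −a₀, Q(t)ᵀ]] for some functions Q : ℝ → M(n×n, ℝ) and r : ℝ → ℝⁿ; in particular the upper-right n×n block and lower-left n×n block of L(t) vanish, its (n+1, n+1) entry is 0, and the blocks a₀ᵀ and −a₀ are constant in t. -/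

import Mathlib

open Matrix

/-- Index type for `(2n+1)×(2n+1)` real matrices with block sizes `(n, 1, n)`. -/
abbrev Idx (n : ℕ) := (Fin n ⊕ Fin 1) ⊕ Fin n

/-- The `3×3`-block matrix with block sizes `(n,1,n)` and the given blocks. -/
def blk3 {n : ℕ} (A₁₁ : Matrix (Fin n) (Fin n) ℝ) (A₁₂ : Matrix (Fin n) (Fin 1) ℝ)
    (A₁₃ : Matrix (Fin n) (Fin n) ℝ) (A₂₁ : Matrix (Fin 1) (Fin n) ℝ)
    (A₂₂ : Matrix (Fin 1) (Fin 1) ℝ) (A₂₃ : Matrix (Fin 1) (Fin n) ℝ)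
    (A₃₁ : Matrix (Fin n) (Fin n) ℝ) (A₃₂ : Matrix (Fin n) (Fin 1) ℝ)
    (A₃₃ : Matrix (Fin n) (Fin n) ℝ) : Matrix (Idx n) (Idx n) ℝ :=
  Matrix.fromBlocks (Matrix.fromBlocks A₁₁ A₁₂ A₂₁ A₂₂) (Matrix.fromRows A₁₃ A₂₃)
    (Matrix.fromCols A₃₁ A₃₂) A₃₃

/-- The matrix `J = [[0,0,Iₙ],[0,1,0],[Iₙ,0,0]]` with block sizes `(n,1,n)`. -/
def Jmat (n : ℕ) : Matrix (Idx n) (Idx n) ℝ := blk3 0 0 1 0 1 0 1 0 0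

/-- The matrix `V = [[−A₀, a₀, 0], [a₀ᵀ, 0, −a₀ᵀ], [0, −a₀, A₀]]` with block sizes `(n,1,n)`. -/
def Vmat {n : ℕ} (A₀ : Matrix (Fin n) (Fin n) ℝ) (a₀ : Matrix (Fin n) (Fin 1) ℝ) :
    Matrix (Idx n) (Idx n) ℝ :=
  blk3 (-A₀) a₀ 0 a₀ᵀ 0 (-a₀ᵀ) 0 (-a₀) A₀

lemma blk3_mul {n : ℕ} (A₁₁ A₁₃ A₃₁ A₃₃ B₁₁ B₁₃ B₃₁ B₃₃ : Matrix (Fin n) (Fin n) ℝ)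
    (A₁₂ A₃₂ B₁₂ B₃₂ : Matrix (Fin n) (Fin 1) ℝ) (A₂₁ A₂₃ B₂₁ B₂₃ : Matrix (Fin 1) (Fin n) ℝ)
    (A₂₂ B₂₂ : Matrix (Fin 1) (Fin 1) ℝ) :
    blk3 A₁₁ A₁₂ A₁₃ A₂₁ A₂₂ A₂₃ A₃₁ A₃₂ A₃₃ * blk3 B₁₁ B₁₂ B₁₃ B₂₁ B₂₂ B₂₃ B₃₁ B₃₂ B₃₃ =
    blk3 (A₁₁*B₁₁ + A₁₂*B₂₁ + A₁₃*B₃₁) (A₁₁*B₁₂ + A₁₂*B₂₂ + A₁₃*B₃₂) (A₁₁*B₁₃ + A₁₂*B₂₃ + A₁₃*B₃₃)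
         (A₂₁*B₁₁ + A₂₂*B₂₁ + A₂₃*B₃₁) (A₂₁*B₁₂ + A₂₂*B₂₂ + A₂₃*B₃₂) (A₂₁*B₁₃ + A₂₂*B₂₃ + A₂₃*B₃₃)
         (A₃₁*B₁₁ + A₃₂*B₂₁ + A₃₃*B₃₁) (A₃₁*B₁₂ + A₃₂*B₂₂ + A₃₃*B₃₂) (A₃₁*B₁₃ + A₃₂*B₂₃ + A₃₃*B₃₃) := by
  ext i j
  rcases i with (i|i)|i <;> rcases j with (j|j)|j <;>
    simp [blk3, Matrix.mul_apply, Matrix.add_apply, Fintype.sum_sum_type,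
      Matrix.fromBlocks, Matrix.fromCols, Finset.sum_add_distrib]

lemma blk3_transpose {n : ℕ} (A₁₁ A₁₃ A₃₁ A₃₃ : Matrix (Fin n) (Fin n) ℝ)
    (A₁₂ A₃₂ : Matrix (Fin n) (Fin 1) ℝ) (A₂₁ A₂₃ : Matrix (Fin 1) (Fin n) ℝ)
    (A₂₂ : Matrix (Fin 1) (Fin 1) ℝ) :
    (blk3 A₁₁ A₁₂ A₁₃ A₂₁ A₂₂ A₂₃ A₃₁ A₃₂ A₃₃)ᵀ =
    blk3 A₁₁ᵀ A₂₁ᵀ A₃₁ᵀ A₁₂ᵀ A₂₂ᵀ A₃₂ᵀ A₁₃ᵀ A₂₃ᵀ A₃₃ᵀ := by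
  ext i j
  rcases i with (i|i)|i <;> rcases j with (j|j)|j <;>
    simp [blk3, Matrix.fromBlocks, Matrix.fromCols]

lemma blk3_one {n : ℕ} : (1 : Matrix (Idx n) (Idx n) ℝ) = blk3 1 0 0 0 1 0 0 0 1 := by
  ext i j
  rcases i with (i|i)|i <;> rcases j with (j|j)|j <;>
    simp [blk3, Matrix.fromBlocks, Matrix.fromCols, Matrix.one_apply,
      Sum.inl.injEq, Sum.inr.injEq]

lemma blk3_neg {n : ℕ} (A₁₁ A₁₃ A₃₁ A₃₃ : Matrix (Fin n) (Fin n) ℝ)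
    (A₁₂ A₃₂ : Matrix (Fin n) (Fin 1) ℝ) (A₂₁ A₂₃ : Matrix (Fin 1) (Fin n) ℝ)
    (A₂₂ : Matrix (Fin 1) (Fin 1) ℝ) :
    -(blk3 A₁₁ A₁₂ A₁₃ A₂₁ A₂₂ A₂₃ A₃₁ A₃₂ A₃₃) =
    blk3 (-A₁₁) (-A₁₂) (-A₁₃) (-A₂₁) (-A₂₂) (-A₂₃) (-A₃₁) (-A₃₂) (-A₃₃) := by
  ext i j
  rcases i with (i|i)|i <;> rcases j with (j|j)|j <;>
    simp [blk3, Matrix.fromBlocks, Matrix.fromCols]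

lemma blk3_inj {n : ℕ} {A₁₁ A₁₃ A₃₁ A₃₃ B₁₁ B₁₃ B₃₁ B₃₃ : Matrix (Fin n) (Fin n) ℝ}
    {A₁₂ A₃₂ B₁₂ B₃₂ : Matrix (Fin n) (Fin 1) ℝ} {A₂₁ A₂₃ B₂₁ B₂₃ : Matrix (Fin 1) (Fin n) ℝ}
    {A₂₂ B₂₂ : Matrix (Fin 1) (Fin 1) ℝ}
    (h : blk3 A₁₁ A₁₂ A₁₃ A₂₁ A₂₂ A₂₃ A₃₁ A₃₂ A₃₃ = blk3 B₁₁ B₁₂ B₁₃ B₂₁ B₂₂ B₂₃ B₃₁ B₃₂ B₃₃) :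
    A₁₁ = B₁₁ ∧ A₁₂ = B₁₂ ∧ A₁₃ = B₁₃ ∧ A₂₁ = B₂₁ ∧ A₂₂ = B₂₂ ∧ A₂₃ = B₂₃ ∧
      A₃₁ = B₃₁ ∧ A₃₂ = B₃₂ ∧ A₃₃ = B₃₃ := by
  refine ⟨?_, ?_, ?_, ?_, ?_, ?_, ?_, ?_, ?_⟩ <;> ext i j
  · simpa [blk3, Matrix.fromBlocks] using congrFun (congrFun h (.inl (.inl i))) (.inl (.inl j))
  · simpa [blk3, Matrix.fromBlocks] using congrFun (congrFun h (.inl (.inl i))) (.inl (.inr j))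
  · simpa [blk3, Matrix.fromBlocks] using
      congrFun (congrFun h (.inl (.inl i))) (.inr j)
  · simpa [blk3, Matrix.fromBlocks] using congrFun (congrFun h (.inl (.inr i))) (.inl (.inl j))
  · simpa [blk3, Matrix.fromBlocks] using congrFun (congrFun h (.inl (.inr i))) (.inl (.inr j))
  · simpa [blk3, Matrix.fromBlocks] using
      congrFun (congrFun h (.inl (.inr i))) (.inr j)
  · simpa [blk3, Matrix.fromBlocks, Matrix.fromCols] using
      congrFun (congrFun h (.inr i)) (.inl (.inl j))
  · simpa [blk3, Matrix.fromBlocks, Matrix.fromCols] using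
      congrFun (congrFun h (.inr i)) (.inl (.inr j))
  · simpa [blk3, Matrix.fromBlocks] using congrFun (congrFun h (.inr i)) (.inr j)

lemma commute_exp_aux {m : Type*} [Fintype m] [DecidableEq m] {A B : Matrix m m ℝ}
    (h : Commute A B) : Commute A (NormedSpace.exp B) := by
  letI : SeminormedRing (Matrix m m ℝ) := Matrix.linftyOpSemiNormedRing
  letI : NormedRing (Matrix m m ℝ) := Matrix.linftyOpNormedRing
  letI : NormedAlgebra ℝ (Matrix m m ℝ) := Matrix.linftyOpNormedAlgebra
  exact h.exp_right

lemma fin1_transpose (M : Matrix (Fin 1) (Fin 1) ℝ) : Mᵀ = M := by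
  ext i j
  fin_cases i <;> fin_cases j <;> rfl

/-- If `exp(tV) = G₁(t) G₂(t)` is the block Cholesky decomposition with
`G₁` block lower triangular and `G₂` block upper triangular with identity diagonal blocks,
then `L(t) = G₁(t)⁻¹ V G₁(t)` has the block form
`[[−Q(t), r(t), 0], [a₀ᵀ, 0, −r(t)ᵀ], [0, −a₀, Q(t)ᵀ]]`. -/
theorem stmt12 (n : ℕ) (A₀ : Matrix (Fin n) (Fin n) ℝ) (hA₀ : A₀ᵀ = A₀)
    (a₀ : Matrix (Fin n) (Fin 1) ℝ) (G₁ G₂ : ℝ → Matrix (Idx n) (Idx n) ℝ)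
    (hlow : ∀ t : ℝ, ∃ (B₁₁ : Matrix (Fin n) (Fin n) ℝ) (B₂₁ : Matrix (Fin 1) (Fin n) ℝ)
      (B₂₂ : Matrix (Fin 1) (Fin 1) ℝ) (B₃₁ : Matrix (Fin n) (Fin n) ℝ)
      (B₃₂ : Matrix (Fin n) (Fin 1) ℝ) (B₃₃ : Matrix (Fin n) (Fin n) ℝ),
      G₁ t = blk3 B₁₁ 0 0 B₂₁ B₂₂ 0 B₃₁ B₃₂ B₃₃)
    (hup : ∀ t : ℝ, ∃ (C₁₂ : Matrix (Fin n) (Fin 1) ℝ) (C₁₃ : Matrix (Fin n) (Fin n) ℝ)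
      (C₂₃ : Matrix (Fin 1) (Fin n) ℝ), G₂ t = blk3 1 C₁₂ C₁₃ 0 1 C₂₃ 0 0 1)
    (hdec : ∀ t : ℝ, NormedSpace.exp (t • Vmat A₀ a₀) = G₁ t * G₂ t) :
    ∀ t : ℝ, ∃ (Q : Matrix (Fin n) (Fin n) ℝ) (r : Matrix (Fin n) (Fin 1) ℝ),
      (G₁ t)⁻¹ * Vmat A₀ a₀ * G₁ t = blk3 (-Q) r 0 a₀ᵀ 0 (-rᵀ) 0 (-a₀) Qᵀ := by
  intro t
  obtain ⟨B₁₁, B₂₁, B₂₂, B₃₁, B₃₂, B₃₃, hG₁⟩ := hlow t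
  obtain ⟨C₁₂, C₁₃, C₂₃, hG₂⟩ := hup t
  set V : Matrix (Idx n) (Idx n) ℝ := Vmat A₀ a₀ with hVdef
  set J : Matrix (Idx n) (Idx n) ℝ := Jmat n with hJdef
  set E : Matrix (Idx n) (Idx n) ℝ := NormedSpace.exp (t • V) with hEdef
  -- basic algebraic facts
  have hVsym : Vᵀ = V := by
    rw [hVdef, Vmat, blk3_transpose]
    simp [hA₀]
  have hJJ : J * J = 1 := by
    rw [hJdef, Jmat, blk3_mul, blk3_one]
    simp
  have hJT : Jᵀ = J := by
    rw [hJdef, Jmat, blk3_transpose]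
    simp
  have hJVJ : J * V * J = -V := by
    rw [hJdef, hVdef, Jmat, Vmat, blk3_mul, blk3_mul, blk3_neg]
    simp [hA₀]
  have hJJ' : ∀ M : Matrix (Idx n) (Idx n) ℝ, J * (J * M) = M := fun M => by
    rw [← mul_assoc, hJJ, one_mul]
  -- exponential facts
  have hEsym : Eᵀ = E := by
    rw [hEdef, ← Matrix.exp_transpose]
    congr 1
    rw [transpose_smul, hVsym]
  have hcommVE : V * E = E * V :=
    (commute_exp_aux ((Commute.refl V).smul_right t)).eq
  have hmidJ : J * (t • V) * J = -(t • V) := by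
    rw [mul_smul_comm, smul_mul_assoc, hJVJ, smul_neg]
  have Ju : (Matrix (Idx n) (Idx n) ℝ)ˣ := ⟨J, J, hJJ, hJJ⟩
  have hconj : NormedSpace.exp (-(t • V)) = J * E * J := by
    rw [← hmidJ, hEdef]
    exact Matrix.exp_units_conj ⟨J, J, hJJ, hJJ⟩ (t • V)
  have hinvE : NormedSpace.exp (-(t • V)) * E = 1 := by
    rw [hEdef, ← Matrix.exp_add_of_commute _ _ ((Commute.refl (t • V)).neg_left),
      neg_add_cancel, NormedSpace.exp_zero]
  have key : J * Eᵀ * J * E = 1 := by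
    rw [hEsym, ← hconj, hinvE]
  -- derive J * G₁ᵀ * J * G₁ = 1
  have hTE : (G₂ t)ᵀ * (G₁ t)ᵀ = E := by
    rw [← transpose_mul, ← hdec t, hEsym]
  have hmain : (J * (G₂ t)ᵀ * J) * ((J * (G₁ t)ᵀ * J) * G₁ t) * G₂ t = 1 := by
    have h2 : J * ((G₂ t)ᵀ * (J * (J * ((G₁ t)ᵀ * (J * (G₁ t * G₂ t)))))) = 1 := by
      rw [hJJ', ← hdec t, ← hEdef]
      calc J * ((G₂ t)ᵀ * ((G₁ t)ᵀ * (J * E)))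
          = J * (((G₂ t)ᵀ * (G₁ t)ᵀ) * (J * E)) := by rw [mul_assoc]
        _ = J * (E * (J * E)) := by rw [hTE]
        _ = J * Eᵀ * J * E := by rw [hEsym, mul_assoc, mul_assoc]
        _ = 1 := key
    calc (J * (G₂ t)ᵀ * J) * ((J * (G₁ t)ᵀ * J) * G₁ t) * G₂ t
        = J * ((G₂ t)ᵀ * (J * (J * ((G₁ t)ᵀ * (J * (G₁ t * G₂ t)))))) := by
          simp only [mul_assoc]
      _ = 1 := h2
  have hF : J * (G₁ t)ᵀ * J = blk3 B₃₃ᵀ 0 0 B₃₂ᵀ B₂₂ᵀ 0 B₃₁ᵀ B₂₁ᵀ B₁₁ᵀ := by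
    rw [hG₁, blk3_transpose, hJdef, Jmat, blk3_mul, blk3_mul]
    simp
  have hU : J * (G₂ t)ᵀ * J = blk3 1 C₂₃ᵀ C₁₃ᵀ 0 1 C₁₂ᵀ 0 0 1 := by
    rw [hG₂, blk3_transpose, hJdef, Jmat, blk3_mul, blk3_mul]
    simp
  obtain ⟨X₁₁, X₂₁, X₂₂, X₃₁, X₃₂, X₃₃, hX⟩ :
      ∃ (X₁₁ : Matrix (Fin n) (Fin n) ℝ) (X₂₁ : Matrix (Fin 1) (Fin n) ℝ)
        (X₂₂ : Matrix (Fin 1) (Fin 1) ℝ) (X₃₁ : Matrix (Fin n) (Fin n) ℝ)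
        (X₃₂ : Matrix (Fin n) (Fin 1) ℝ) (X₃₃ : Matrix (Fin n) (Fin n) ℝ),
        (J * (G₁ t)ᵀ * J) * G₁ t = blk3 X₁₁ 0 0 X₂₁ X₂₂ 0 X₃₁ X₃₂ X₃₃ := by
    refine ⟨B₃₃ᵀ*B₁₁, B₃₂ᵀ*B₁₁ + B₂₂ᵀ*B₂₁, B₂₂ᵀ*B₂₂,
      B₃₁ᵀ*B₁₁ + B₂₁ᵀ*B₂₁ + B₁₁ᵀ*B₃₁, B₂₁ᵀ*B₂₂ + B₁₁ᵀ*B₃₂, B₁₁ᵀ*B₃₃, ?_⟩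
    rw [hF, hG₁, blk3_mul]
    simp
  rw [hU, hX, hG₂, blk3_mul, blk3_mul, blk3_one] at hmain
  simp only [Matrix.one_mul, Matrix.mul_one, Matrix.zero_mul, Matrix.mul_zero, add_zero, zero_add] at hmain
  obtain ⟨e11, -, -, e21, e22, -, e31, e32, e33⟩ := blk3_inj hmain
  have hX31 : X₃₁ = 0 := e31
  have hX32 : X₃₂ = 0 := by simpa [hX31] using e32
  have hX21 : X₂₁ = 0 := by simpa [hX31] using e21
  have hX22 : X₂₂ = 1 := by simpa [hX21, hX31, hX32] using e22
  have hX11 : X₁₁ = 1 := by simpa [hX21, hX31] using e11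
  have hX33 : X₃₃ = 1 := by simpa [hX31, hX32] using e33
  have hK : (J * (G₁ t)ᵀ * J) * G₁ t = 1 := by
    rw [hX, hX11, hX21, hX22, hX31, hX32, hX33]
    exact blk3_one.symm
  have hKinv : (G₁ t)⁻¹ = J * (G₁ t)ᵀ * J := Matrix.inv_eq_left_inv hK
  have hVblk : V = blk3 (-A₀) a₀ 0 a₀ᵀ 0 (-a₀ᵀ) 0 (-a₀) A₀ := hVdef.trans rfl
  have hJblk : J = blk3 0 0 1 0 1 0 1 0 0 := hJdef.trans rfl
  -- the matrix L in block form
  obtain ⟨M₁₁, M₁₂, M₁₃, M₂₁, M₂₂, M₂₃, M₃₁, M₃₂, M₃₃, hL⟩ :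
      ∃ (M₁₁ : Matrix (Fin n) (Fin n) ℝ) (M₁₂ : Matrix (Fin n) (Fin 1) ℝ)
        (M₁₃ : Matrix (Fin n) (Fin n) ℝ) (M₂₁ : Matrix (Fin 1) (Fin n) ℝ)
        (M₂₂ : Matrix (Fin 1) (Fin 1) ℝ) (M₂₃ : Matrix (Fin 1) (Fin n) ℝ)
        (M₃₁ : Matrix (Fin n) (Fin n) ℝ) (M₃₂ : Matrix (Fin n) (Fin 1) ℝ)
        (M₃₃ : Matrix (Fin n) (Fin n) ℝ),
        (J * (G₁ t)ᵀ * J) * V * G₁ t =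
          blk3 M₁₁ M₁₂ M₁₃ M₂₁ M₂₂ M₂₃ M₃₁ M₃₂ M₃₃ :=
    ⟨_, _, _, _, _, _, _, _, _, by rw [hF, hVblk, hG₁, blk3_mul, blk3_mul]⟩
  -- structural zero in the upper-right corner
  have hM13 : M₁₃ = 0 := by
    have hL2 := hL
    rw [hF, hVblk, hG₁, blk3_mul, blk3_mul] at hL2
    obtain ⟨-, -, f13, -⟩ := blk3_inj hL2
    rw [← f13]
    simp
  -- symmetry relation J Lᵀ J = -L
  have hVJ' : ∀ M : Matrix (Idx n) (Idx n) ℝ, V * (J * M) = J * -(V * M) := by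
    intro M
    have h1 : V * J = J * -V := by
      calc V * J = (J * J) * (V * J) := by rw [hJJ, one_mul]
        _ = J * (J * (V * J)) := by simp only [mul_assoc]
        _ = J * (J * V * J) := by rw [mul_assoc]
        _ = J * -V := by rw [hJVJ]
    calc V * (J * M) = (V * J) * M := (mul_assoc _ _ _).symm
      _ = (J * -V) * M := by rw [h1]
      _ = J * -(V * M) := by rw [mul_assoc, neg_mul]
  have hsym : J * ((J * (G₁ t)ᵀ * J) * V * G₁ t)ᵀ * J =
      -((J * (G₁ t)ᵀ * J) * V * G₁ t) := by
    simp only [transpose_mul, hVsym, hJT, transpose_transpose, mul_assoc, hJJ', hVJ',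
      hJJ, mul_one, mul_neg, neg_mul]
  rw [hL, blk3_transpose, blk3_neg, hJblk, blk3_mul, blk3_mul] at hsym
  simp only [Matrix.one_mul, Matrix.mul_one, Matrix.zero_mul, Matrix.mul_zero, add_zero, zero_add] at hsym
  obtain ⟨-, -, -, -, s22, s23, -, -, s33⟩ := blk3_inj hsym
  -- relation L G₂ = G₂ V
  have hdect : E = G₁ t * G₂ t := hdec t
  have hKG : ∀ M : Matrix (Idx n) (Idx n) ℝ, (J * (G₁ t)ᵀ * J) * (G₁ t * M) = M := by
    intro M
    rw [← mul_assoc, hK, one_mul]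
  have hLG₂ : (J * (G₁ t)ᵀ * J) * V * G₁ t * G₂ t = G₂ t * V := by
    calc (J * (G₁ t)ᵀ * J) * V * G₁ t * G₂ t
        = (J * (G₁ t)ᵀ * J) * (V * (G₁ t * G₂ t)) := by simp only [mul_assoc]
      _ = (J * (G₁ t)ᵀ * J) * (V * E) := by rw [← hdect]
      _ = (J * (G₁ t)ᵀ * J) * (E * V) := by rw [hcommVE]
      _ = (J * (G₁ t)ᵀ * J) * (G₁ t * (G₂ t * V)) := by rw [hdect]; simp only [mul_assoc]
      _ = G₂ t * V := hKG _
  rw [hL, hG₂, hVblk] at hLG₂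
  simp only [blk3_mul] at hLG₂
  simp only [Matrix.one_mul, Matrix.mul_one, Matrix.zero_mul, Matrix.mul_zero, add_zero, zero_add] at hLG₂
  obtain ⟨-, -, -, g21, -, -, g31, g32, -⟩ := blk3_inj hLG₂
  have hM32 : M₃₂ = -a₀ := by simpa [g31] using g32
  have hM22 : M₂₂ = 0 := by
    have h := (fin1_transpose M₂₂).symm.trans s22
    ext i j
    have h2 := congrFun (congrFun h i) j
    simp only [Matrix.neg_apply, Matrix.zero_apply] at h2 ⊢
    linarith
  have hM23 : M₂₃ = -M₁₂ᵀ := by rw [s23, neg_neg]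
  have hM33 : M₃₃ = -M₁₁ᵀ := by rw [s33, neg_neg]
  refine ⟨-M₁₁, M₁₂, ?_⟩
  rw [hKinv, hL, hM13, g21, hM22, hM23, g31, hM32, hM33, transpose_neg, neg_neg]
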